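/- Let R be a commutative Noetherian ring of prime characteristic p whose Frobenius endomorphism is finite and flat, and let a be an ideal of R. Then: (1) if α > 0 is an F-jumping exponent of a, then pα is also an F-jumping exponent of a; (2) if a can be generated by m elements and α > m is an F-jumping exponent of a, then α − 1 is also an F-jumping exponent of a. -/

import Mathlib

open Ideal

/-- The `q`-th bracket power `J^{[q]}` of an ideal: the ideal generated by
the `q`-th powers of the elements of `J`. -/
def bracketPow {R : Type*} [CommRing R] (J : Ideal R) (q : ℕ) : Ideal R :=
  Ideal.span ((fun x => x ^ q) '' (J : Set R))

/-- The ideal `b^{[1/q]}`: the smallest ideal `J` with `b ⊆ J^{[q]}`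
(realized as the intersection of all such ideals). -/
def frobRoot {R : Type*} [CommRing R] (b : Ideal R) (q : ℕ) : Ideal R :=
  sInf {J : Ideal R | b ≤ bracketPow J q}

section CoordsSec
variable {R : Type*} [CommRing R]

/-- Coordinate decomposition for a ring endomorphism `f`: data witnessing that `R` is a
direct summand of a finite free module over itself via `f`. -/
def CoordsFor (f : R →+* R) : Prop :=
  ∃ (n : ℕ) (c : Fin n → R → R) (w : Fin n → R),
    (∀ i (z z' : R), c i (z + z') = c i z + c i z') ∧
    (∀ i (r z : R), c i (f r * z) = r * c i z) ∧
    (∀ z : R, z = ∑ i, f (c i z) * w i)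

lemma coordsFor_id : CoordsFor (RingHom.id R) :=
  ⟨1, fun _ z => z, fun _ => 1, fun _ _ _ => rfl, fun _ _ _ => rfl, fun z => by simp⟩

lemma CoordsFor.comp {f g : R →+* R} (hf : CoordsFor f) (hg : CoordsFor g) :
    CoordsFor (f.comp g) := by
  obtain ⟨n, c, w, hca, hcs, hcd⟩ := hf
  obtain ⟨n', d, u, hda, hds, hdd⟩ := hg
  refine ⟨n * n', fun k z => d (finProdFinEquiv.symm k).2 (c (finProdFinEquiv.symm k).1 z),
    fun k => f (u (finProdFinEquiv.symm k).2) * w (finProdFinEquiv.symm k).1, ?_, ?_, ?_⟩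
  · intro i z z'; dsimp only; rw [hca, hda]
  · intro k r z; dsimp only; rw [RingHom.comp_apply, hcs, hds]
  · intro z
    dsimp only
    rw [Equiv.sum_comp (finProdFinEquiv.symm :
      Fin (n * n') ≃ Fin n × Fin n')
      (fun x : Fin n × Fin n' => (f.comp g) (d x.2 (c x.1 z)) * (f (u x.2) * w x.1))]
    rw [Fintype.sum_prod_type]
    calc z = ∑ i, f (c i z) * w i := hcd z
      _ = ∑ i, ∑ j, (f.comp g) (d j (c i z)) * (f (u j) * w i) := by
          refine Finset.sum_congr rfl fun i _ => ?_
          conv_lhs => rw [hdd (c i z)]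
          rw [map_sum, Finset.sum_mul]
          refine Finset.sum_congr rfl fun j _ => ?_
          rw [_root_.map_mul f]; simp only [RingHom.comp_apply]; ring

/-- membership in the extension of an ideal along `f`, via coordinates -/
lemma mem_map_coords {f : R →+* R} {n : ℕ} {c : Fin n → R → R} {w : Fin n → R}
    (hca : ∀ i (z z' : R), c i (z + z') = c i z + c i z')
    (hcs : ∀ i (r z : R), c i (f r * z) = r * c i z)
    (hcd : ∀ z : R, z = ∑ i, f (c i z) * w i)
    (J : Ideal R) (z : R) : z ∈ J.map f ↔ ∀ i, c i z ∈ J := by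
  constructor
  · intro hz i
    have hz' : z ∈ Submodule.span R (⇑f '' (J : Set R)) := hz
    obtain ⟨k, r, y, hsum⟩ := (Submodule.mem_span_set' (R := R) (M := R)).mp hz'
    subst hsum
    let C : R →+ R := AddMonoidHom.mk' (c i) (hca i)
    have : c i (∑ j, r j • (y j : R)) = ∑ j, c i (r j • (y j : R)) := map_sum C _ _
    rw [this]
    refine Submodule.sum_mem _ fun j _ => ?_
    obtain ⟨x, hxJ, hx⟩ := (y j).2
    have : r j • (y j : R) = f x * r j := by rw [← hx]; rw [smul_eq_mul, mul_comm]
    rw [this, hcs]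
    exact J.mul_mem_right _ hxJ
  · intro h
    rw [hcd z]
    exact Submodule.sum_mem _ fun i _ =>
      Ideal.mul_mem_right _ _ (Ideal.mem_map_of_mem f (h i))

end CoordsSec

section Main
variable {R : Type*} [CommRing R] (p : ℕ) [hp : Fact p.Prime] [CharP R p]

lemma bracketPow_eq_map (J : Ideal R) (e : ℕ) :
    bracketPow J (p ^ e) = J.map (iterateFrobenius R p e) := by
  rfl

lemma bracketPow_mono {J K : Ideal R} (q : ℕ) (h : J ≤ K) :
    bracketPow J q ≤ bracketPow K q :=
  Ideal.span_mono (Set.image_mono h)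

lemma bracketPow_bracketPow (J : Ideal R) (e e' : ℕ) :
    bracketPow (bracketPow J (p ^ e)) (p ^ e') = bracketPow J (p ^ (e' + e)) := by
  rw [bracketPow_eq_map, bracketPow_eq_map, Ideal.map_map, ← iterateFrobenius_add,
    bracketPow_eq_map]

lemma bracketPow_mul (I J : Ideal R) (e : ℕ) :
    bracketPow (I * J) (p ^ e) = bracketPow I (p ^ e) * bracketPow J (p ^ e) := by
  rw [bracketPow_eq_map, bracketPow_eq_map, bracketPow_eq_map, Ideal.map_mul]

variable {p}

lemma frobRoot_mono {b b' : Ideal R} (q : ℕ) (h : b ≤ b') :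
    frobRoot b q ≤ frobRoot b' q :=
  sInf_le_sInf fun _ hJ => le_trans h hJ

lemma le_bracketPow_frobRoot (e : ℕ) (hco : CoordsFor (iterateFrobenius R p e))
    (b : Ideal R) : b ≤ bracketPow (frobRoot b (p ^ e)) (p ^ e) := by
  obtain ⟨n, c, w, hca, hcs, hcd⟩ := hco
  intro x hx
  rw [bracketPow_eq_map, mem_map_coords hca hcs hcd]
  intro i
  refine Submodule.mem_sInf.mpr fun J hJ => ?_
  have hx' : x ∈ Ideal.map (iterateFrobenius R p e) J := by
    rw [← bracketPow_eq_map]; exact hJ hx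
  exact (mem_map_coords hca hcs hcd J x).mp hx' i

lemma frobRoot_le_iff (e : ℕ) (hco : CoordsFor (iterateFrobenius R p e))
    {b J : Ideal R} : frobRoot b (p ^ e) ≤ J ↔ b ≤ bracketPow J (p ^ e) := by
  constructor
  · intro h
    exact le_trans (le_bracketPow_frobRoot e hco b) (bracketPow_mono _ h)
  · intro h
    exact sInf_le h

lemma frobRoot_iSup (e : ℕ) (hco : CoordsFor (iterateFrobenius R p e))
    {ι : Sort*} (b : ι → Ideal R) :
    frobRoot (⨆ i, b i) (p ^ e) = ⨆ i, frobRoot (b i) (p ^ e) := by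
  apply le_antisymm
  · rw [frobRoot_le_iff e hco]
    refine iSup_le fun i => le_trans (le_bracketPow_frobRoot e hco (b i)) ?_
    exact bracketPow_mono _ (le_iSup (fun i => frobRoot (b i) (p ^ e)) i)
  · exact iSup_le fun i => frobRoot_mono _ (le_iSup b i)

lemma frobRoot_frobRoot (e e' : ℕ) (hco : ∀ k, CoordsFor (iterateFrobenius R p k))
    (b : Ideal R) :
    frobRoot (frobRoot b (p ^ e')) (p ^ e) = frobRoot b (p ^ (e + e')) := by
  apply le_antisymm
  · rw [frobRoot_le_iff e (hco e), frobRoot_le_iff e' (hco e'),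
      bracketPow_bracketPow, add_comm e' e]
    exact le_bracketPow_frobRoot (e + e') (hco (e + e')) b
  · refine sInf_le ?_
    show b ≤ bracketPow _ (p ^ (e + e'))
    rw [add_comm e e', ← bracketPow_bracketPow]
    refine le_trans (le_bracketPow_frobRoot e' (hco e') b) (bracketPow_mono _ ?_)
    exact le_bracketPow_frobRoot e (hco e) _

lemma mem_of_pow_mem (e : ℕ) (hco : CoordsFor (iterateFrobenius R p e))
    {J : Ideal R} {x : R} (h : x ^ p ^ e ∈ bracketPow J (p ^ e)) : x ∈ J := by
  obtain ⟨n, c, w, hca, hcs, hcd⟩ := hco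
  rw [bracketPow_eq_map, mem_map_coords hca hcs hcd] at h
  have hx : ∀ i, x * c i 1 ∈ J := by
    intro i
    have : x ^ p ^ e = iterateFrobenius R p e x * 1 := by
      rw [mul_one, iterateFrobenius_def]
    specialize h i
    rw [this, hcs] at h
    exact h
  have h1 : (1 : R) = ∑ i, (c i 1) ^ p ^ e * w i := by
    conv_lhs => rw [hcd 1]
    simp [iterateFrobenius_def]
  have : x = ∑ i, (c i 1) ^ (p ^ e - 1) * w i * (x * c i 1) := by
    calc x = x * 1 := (mul_one x).symm
      _ = ∑ i, x * ((c i 1) ^ p ^ e * w i) := by rw [← Finset.mul_sum, ← h1, mul_one]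
      _ = ∑ i, (c i 1) ^ (p ^ e - 1) * w i * (x * c i 1) := by
          refine Finset.sum_congr rfl fun i _ => ?_
          have hq : p ^ e = (p ^ e - 1) + 1 :=
            (Nat.succ_pred_eq_of_pos (pow_pos hp.out.pos e)).symm
          have hpow : (c i 1) ^ p ^ e = (c i 1) ^ (p ^ e - 1) * c i 1 := by
            conv_lhs => rw [hq]
            rw [pow_succ]
          rw [hpow]
          ring
  rw [this]
  exact Submodule.sum_mem _ fun i _ => J.mul_mem_left _ (hx i)

lemma mem_bracketPow_colon (e : ℕ) (hco : CoordsFor (iterateFrobenius R p e))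
    {J : Ideal R} {x z : R} (h : x ^ p ^ e * z ∈ bracketPow J (p ^ e)) :
    z ∈ bracketPow (J.colon (Ideal.span {x})) (p ^ e) := by
  obtain ⟨n, c, w, hca, hcs, hcd⟩ := hco
  rw [bracketPow_eq_map, mem_map_coords hca hcs hcd] at h ⊢
  intro i
  specialize h i
  have : x ^ p ^ e * z = iterateFrobenius R p e x * z := by rw [iterateFrobenius_def]
  rw [this, hcs] at h
  rw [Ideal.mem_colon_span_singleton, mul_comm]
  exact h

end Main


/-- The generalized test ideal `τ(a^c) = ⋃_{e ≥ 1} (a^{⌈c p^e⌉})^{[1/p^e]}`. -/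
noncomputable def testIdeal {R : Type*} [CommRing R] (p : ℕ) (a : Ideal R) (c : ℝ) : Ideal R :=
  ⨆ e : ℕ, frobRoot (a ^ ⌈c * (p : ℝ) ^ (e + 1)⌉₊) (p ^ (e + 1))

/-- `ν_a^J(q)`: the largest nonnegative integer `r` with `a^r ⊄ J^{[q]}`
(and `0` if there is no such `r`). -/
noncomputable def nuF {R : Type*} [CommRing R] (a J : Ideal R) (q : ℕ) : ℕ :=
  sSup {r : ℕ | ¬ a ^ r ≤ bracketPow J q}

/-- The F-threshold `c^J(a) = sup_{e ≥ 1} ν_a^J(p^e)/p^e`. -/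
noncomputable def FThreshold {R : Type*} [CommRing R] (p : ℕ) (a J : Ideal R) : ℝ :=
  ⨆ e : ℕ, (nuF a J (p ^ (e + 1)) : ℝ) / (p : ℝ) ^ (e + 1)

/-- `α > 0` is an F-jumping exponent of `a` if `τ(a^α) ≠ τ(a^c)` for all `0 ≤ c < α`. -/
def IsFJumpingExponent {R : Type*} [CommRing R] (p : ℕ) (a : Ideal R) (α : ℝ) : Prop :=
  0 < α ∧ ∀ c : ℝ, 0 ≤ c → c < α → testIdeal p a c ≠ testIdeal p a α



lemma exists_coords_general {R S : Type*} [CommRing R] [CommRing S] [IsNoetherianRing R]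
    (f : R →+* S) (hfin : f.Finite) (hflat : f.Flat) :
    ∃ (n : ℕ) (c : Fin n → S → R) (w : Fin n → S),
      (∀ i (z z' : S), c i (z + z') = c i z + c i z') ∧
      (∀ i (r : R) (z : S), c i (f r * z) = r * c i z) ∧
      (∀ z : S, z = ∑ i, f (c i z) * w i) := by
  letI : Algebra R S := f.toAlgebra
  haveI : Module.Finite R S := hfin
  haveI : Module.Flat R S := hflat
  haveI : Module.FinitePresentation R S := Module.finitePresentation_of_finite R S
  haveI : Module.Projective R S :=
    (Module.freeLocus_eq_univ_iff (R := R) (M := S)).mp Module.freeLocus_eq_univ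
  obtain ⟨n, π, ι, hs, hi, hcomp⟩ := Module.Finite.exists_comp_eq_id_of_projective R S
  have halg : algebraMap R S = f := rfl
  refine ⟨n, fun i z => ι z i, fun i => π (Pi.single i 1), ?_, ?_, ?_⟩
  · intro i z z'
    show ι (z + z') i = ι z i + ι z' i
    rw [map_add]; rfl
  · intro i r z
    show ι (f r * z) i = r * ι z i
    have h : f r * z = r • z := by rw [Algebra.smul_def, halg]
    rw [h, map_smul]; rfl
  · intro z
    have h1 : π (ι z) = z := by
      have := congrArg (fun g => g z) (congrArg DFunLike.coe hcomp)
      simpa using this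
    conv_lhs => rw [← h1]
    have h2 : ι z = ∑ i, (ι z i) • (Pi.single i (1 : R) : Fin n → R) := by
      funext j
      rw [Finset.sum_apply]
      simp [Pi.single_apply, mul_comm]
    rw [h2, map_sum]
    refine Finset.sum_congr rfl fun i _ => ?_
    rw [map_smul, Algebra.smul_def, halg]

section Main2
variable {R : Type*} [CommRing R] {p : ℕ} [hp : Fact p.Prime] [CharP R p]

lemma testIdeal_antitone (a : Ideal R) {c c' : ℝ} (h : c ≤ c') :
    testIdeal p a c' ≤ testIdeal p a c := by
  refine iSup_mono fun e => frobRoot_mono _ (Ideal.pow_le_pow_right ?_)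
  exact Nat.ceil_le_ceil (mul_le_mul_of_nonneg_right h (by positivity))

lemma tau_term_mono (hco : ∀ k, CoordsFor (iterateFrobenius R p k)) (a : Ideal R) (c : ℝ)
    (e : ℕ) : frobRoot (a ^ ⌈c * (p : ℝ) ^ (e + 1)⌉₊) (p ^ (e + 1)) ≤
      frobRoot (a ^ ⌈c * (p : ℝ) ^ (e + 2)⌉₊) (p ^ (e + 2)) := by
  set r := ⌈c * (p : ℝ) ^ (e + 1)⌉₊ with hr
  set r' := ⌈c * (p : ℝ) ^ (e + 2)⌉₊ with hr'
  have hple : r' ≤ r * p ^ 1 := by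
    rw [hr', pow_one]
    refine Nat.ceil_le.mpr ?_
    push_cast
    have h2 : c * (p : ℝ) ^ (e + 2) = (c * (p : ℝ) ^ (e + 1)) * p := by ring
    rw [h2]
    exact mul_le_mul_of_nonneg_right (Nat.le_ceil _) (by positivity)
  have hsplit : frobRoot (a ^ r') (p ^ (e + 2)) =
      frobRoot (frobRoot (a ^ r') (p ^ 1)) (p ^ (e + 1)) := by
    rw [frobRoot_frobRoot (e + 1) 1 hco]
  rw [hsplit]
  refine frobRoot_mono _ ?_
  intro x hx
  refine Submodule.mem_sInf.mpr fun J hJ => ?_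
  refine mem_of_pow_mem 1 (hco 1) (J := J) (hJ ?_)
  have h1 : x ^ p ^ 1 ∈ bracketPow (a ^ r) (p ^ 1) :=
    Ideal.subset_span ⟨x, hx, rfl⟩
  have h2 : bracketPow (a ^ r) (p ^ 1) ≤ a ^ r' := by
    refine le_trans (Ideal.span_le.mpr ?_) (Ideal.pow_le_pow_right hple)
    rintro _ ⟨y, hy, rfl⟩
    have hm := Ideal.pow_mem_pow hy (p ^ 1)
    rw [← pow_mul] at hm
    exact hm
  exact h2 h1

lemma frobRoot_p_testIdeal (hco : ∀ k, CoordsFor (iterateFrobenius R p k)) (a : Ideal R)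
    (c : ℝ) : frobRoot (testIdeal p a ((p : ℝ) * c)) (p ^ 1) = testIdeal p a c := by
  unfold testIdeal
  rw [frobRoot_iSup 1 (hco 1)]
  have hterm : ∀ e : ℕ, frobRoot (frobRoot (a ^ ⌈(p : ℝ) * c * (p : ℝ) ^ (e + 1)⌉₊)
      (p ^ (e + 1))) (p ^ 1) = frobRoot (a ^ ⌈c * (p : ℝ) ^ (e + 1 + 1)⌉₊) (p ^ (e + 1 + 1)) := by
    intro e
    have hnat : (1 : ℕ) + (e + 1) = e + 1 + 1 := by omega
    have hre : (p : ℝ) * c * (p : ℝ) ^ (e + 1) = c * (p : ℝ) ^ (e + 1 + 1) := by ring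
    rw [frobRoot_frobRoot 1 (e + 1) hco, hnat, hre]
  rw [iSup_congr hterm]
  set u : ℕ → Ideal R := fun e => frobRoot (a ^ ⌈c * (p : ℝ) ^ (e + 1)⌉₊) (p ^ (e + 1)) with hu
  show (⨆ e, u (e + 1)) = ⨆ e, u e
  apply le_antisymm
  · exact iSup_le fun e => le_iSup u (e + 1)
  · refine iSup_le fun e => le_trans (tau_term_mono hco a c e) ?_
    exact le_iSup (fun e => u (e + 1)) e

end Main2

section Skoda
variable {R : Type*} [CommRing R]

/-- binomial-type expansion bound for ideal powers -/
lemma sup_pow_le_iSup (I J : Ideal R) (r : ℕ) :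
    (I ⊔ J) ^ r ≤ ⨆ j : ℕ, I ^ j * J ^ (r - j) := by
  induction r with
  | zero =>
    refine le_trans ?_ (le_iSup (fun j => I ^ j * J ^ (0 - j)) 0)
    simp
  | succ r ih =>
    rw [pow_succ]
    refine le_trans (Ideal.mul_mono_left ih) ?_
    rw [Submodule.iSup_mul]
    refine iSup_le fun j => ?_
    rw [Submodule.mul_sup]
    refine sup_le ?_ ?_
    · refine le_trans ?_ (le_iSup (fun j => I ^ j * J ^ (r + 1 - j)) (j + 1))
      have h1 : I ^ j * J ^ (r - j) * I = I ^ (j + 1) * J ^ (r - j) := by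
        rw [pow_succ]; ring
      rw [h1]
      refine Ideal.mul_mono_right (Ideal.pow_le_pow_right ?_)
      omega
    · refine le_trans ?_ (le_iSup (fun j => I ^ j * J ^ (r + 1 - j)) j)
      have h1 : I ^ j * J ^ (r - j) * J = I ^ j * J ^ (r - j + 1) := by
        rw [pow_succ]; ring
      rw [h1]
      refine Ideal.mul_mono_right (Ideal.pow_le_pow_right ?_)
      omega

/-- pigeonhole: high powers of a finitely generated ideal factor through bracket powers -/
lemma span_pow_le_bracketPow (a : Ideal R) (q : ℕ) (s : Finset R) (hs : ↑s ⊆ (a : Set R)) :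
    ∀ r : ℕ, s.card * (q - 1) + 1 ≤ r →
      Ideal.span (s : Set R) ^ r ≤ bracketPow a q * a ^ (r - q) := by
  classical
  induction s using Finset.induction_on with
  | empty =>
    intro r hr
    simp only [Finset.coe_empty, Ideal.span_empty]
    rw [← Ideal.zero_eq_bot, zero_pow (by omega : r ≠ 0)]
    exact bot_le
  | @insert x s hx ih =>
    intro r hr
    rw [Finset.card_insert_of_notMem hx] at hr
    have hxa : x ∈ a := hs (by simp)
    have hsa : ↑s ⊆ (a : Set R) := subset_trans (by simp [Set.subset_insert]) hs
    have hspan : Ideal.span (↑(insert x s) : Set R) =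
        Ideal.span {x} ⊔ Ideal.span (s : Set R) := by
      rw [Finset.coe_insert, Ideal.span_insert]
    rw [hspan]
    refine le_trans (sup_pow_le_iSup _ _ r) (iSup_le fun j => ?_)
    by_cases hjq : q ≤ j
    · -- use x^q from the first factor
      have h1 : Ideal.span {x} ^ j ≤ bracketPow a q * a ^ (j - q) := by
        rw [Ideal.span_singleton_pow, Ideal.span_le, Set.singleton_subset_iff]
        have hxj : x ^ j = x ^ q * x ^ (j - q) := by
          rw [← pow_add]; congr 1; omega
        rw [hxj]
        exact Ideal.mul_mem_mul (Ideal.subset_span ⟨x, hxa, rfl⟩)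
          (Ideal.pow_mem_pow hxa _)
      refine le_trans (Ideal.mul_mono h1 (Ideal.pow_right_mono
        (Ideal.span_le.mpr hsa) _)) ?_
      rw [mul_assoc, ← pow_add]
      exact Ideal.mul_mono_right (Ideal.pow_le_pow_right (by omega))
    · -- use induction hypothesis on the second factor
      push_neg at hjq
      have hcard : s.card * (q - 1) + 1 ≤ r - j := by
        have hmul : (s.card + 1) * (q - 1) = s.card * (q - 1) + (q - 1) :=
          Nat.succ_mul _ _
        omega
      have h2 := ih hsa (r - j) hcard
      refine le_trans (Ideal.mul_mono (Ideal.pow_right_mono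
        (Ideal.span_le.mpr (Set.singleton_subset_iff.mpr hxa)) _) h2) ?_
      have h3 : a ^ j * (bracketPow a q * a ^ (r - j - q)) =
          bracketPow a q * a ^ (j + (r - j - q)) := by
        rw [pow_add]; ring
      rw [h3]
      exact Ideal.mul_mono_right (Ideal.pow_le_pow_right (by omega))

lemma pow_le_bracketPow_mul {a : Ideal R} {m : ℕ} {g : Fin m → R}
    (ha : a = Ideal.span (Set.range g)) (q r : ℕ) (hr : m * (q - 1) + 1 ≤ r) :
    a ^ r ≤ bracketPow a q * a ^ (r - q) := by
  classical
  have hset : Set.range g = ↑(Finset.univ.image g) := by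
    simp
  have hsub : ↑(Finset.univ.image g) ⊆ (a : Set R) := by
    rw [ha, ← hset]
    exact Ideal.subset_span
  have hcard : (Finset.univ.image g).card * (q - 1) + 1 ≤ r := by
    have := Finset.card_image_le (s := (Finset.univ : Finset (Fin m))) (f := g)
    rw [Finset.card_univ, Fintype.card_fin] at this
    have := Nat.mul_le_mul_right (q - 1) this
    omega
  have := span_pow_le_bracketPow a q (Finset.univ.image g) hsub r hcard
  rw [← hset, ← ha] at this
  exact this

end Skoda

section Main3
variable {R : Type*} [CommRing R] {p : ℕ} [hp : Fact p.Prime] [CharP R p]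

set_option maxHeartbeats 1000000 in
lemma skoda_level (hco : ∀ k, CoordsFor (iterateFrobenius R p k))
    {a : Ideal R} {m : ℕ} {g : Fin m → R} (ha : a = Ideal.span (Set.range g))
    (hm : 1 ≤ m) (e r : ℕ) (hr : m * (p ^ (e + 1) - 1) + 1 ≤ r) :
    frobRoot (a ^ r) (p ^ (e + 1)) = a * frobRoot (a ^ (r - p ^ (e + 1))) (p ^ (e + 1)) := by
  have hq1 : 1 ≤ p ^ (e + 1) := Nat.one_le_pow _ _ hp.out.pos
  have hqr : p ^ (e + 1) ≤ r := by
    have h2 := Nat.mul_le_mul_right (p ^ (e + 1) - 1) hm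
    omega
  apply le_antisymm
  · rw [frobRoot_le_iff (e + 1) (hco (e + 1))]
    refine le_trans (pow_le_bracketPow_mul ha (p ^ (e + 1)) r hr) ?_
    rw [bracketPow_mul]
    exact Ideal.mul_mono_right (le_bracketPow_frobRoot (e + 1) (hco (e + 1)) _)
  · refine le_sInf fun J hJ => ?_
    have hJ' : a ^ r ≤ bracketPow J (p ^ (e + 1)) := hJ
    have key : ∀ i : Fin m, ∀ y ∈ frobRoot (a ^ (r - p ^ (e + 1))) (p ^ (e + 1)),
        g i * y ∈ J := by
      intro i y hy
      have hcol : frobRoot (a ^ (r - p ^ (e + 1))) (p ^ (e + 1)) ≤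
          J.colon (Ideal.span {g i}) := by
        rw [frobRoot_le_iff (e + 1) (hco (e + 1))]
        intro z hz
        refine mem_bracketPow_colon (e + 1) (hco (e + 1)) (J := J) (x := g i) (z := z) ?_
        have hgi : g i ∈ a := by
          rw [ha]; exact Ideal.subset_span (Set.mem_range_self i)
        have h1 : (g i) ^ p ^ (e + 1) * z ∈ a ^ p ^ (e + 1) * a ^ (r - p ^ (e + 1)) :=
          Ideal.mul_mem_mul (Ideal.pow_mem_pow hgi _) hz
        rw [← pow_add, Nat.add_sub_cancel' hqr] at h1
        exact hJ' h1
      have h2 := hcol hy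
      rw [Ideal.mem_colon_span_singleton] at h2
      rw [mul_comm]
      exact h2
    refine Ideal.mul_le.mpr fun x hxa y hyK => ?_
    revert hxa
    intro hxa
    rw [ha] at hxa
    refine Submodule.span_induction ?_ ?_ ?_ ?_ hxa
    · rintro _ ⟨i, rfl⟩
      exact key i y hyK
    · simp
    · intro z z' _ _ hz hz'
      rw [add_mul]
      exact J.add_mem hz hz'
    · intro r z _ hz
      rw [smul_eq_mul, mul_assoc]
      exact J.mul_mem_left _ hz

lemma ceil_sub_one_eq {d : ℝ} (q : ℕ) (hd : 1 ≤ d) :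
    ⌈(d - 1) * (q : ℝ)⌉₊ = ⌈d * (q : ℝ)⌉₊ - q := by
  have h1 : (d - 1) * (q : ℝ) = d * q - (q : ℕ) := by push_cast; ring
  rw [← Int.ceil_toNat, ← Int.ceil_toNat, h1, Int.ceil_sub_natCast]
  omega

set_option maxHeartbeats 1000000 in
lemma skoda_tau (hco : ∀ k, CoordsFor (iterateFrobenius R p k))
    {a : Ideal R} {m : ℕ} {g : Fin m → R} (ha : a = Ideal.span (Set.range g))
    (hm : 1 ≤ m) {d : ℝ} (hd : (m : ℝ) ≤ d) :
    testIdeal p a d = a * testIdeal p a (d - 1) := by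
  have hd1 : 1 ≤ d := le_trans (by exact_mod_cast hm) hd
  unfold testIdeal
  rw [Submodule.mul_iSup]
  refine iSup_congr fun e => ?_
  have hq1 : 1 ≤ p ^ (e + 1) := Nat.one_le_pow _ _ hp.out.pos
  have hcast : ((p ^ (e + 1) : ℕ) : ℝ) = (p : ℝ) ^ (e + 1) := by push_cast; rfl
  have hmq : m * p ^ (e + 1) ≤ ⌈d * (p : ℝ) ^ (e + 1)⌉₊ := by
    have h1 : ((m * p ^ (e + 1) : ℕ) : ℝ) ≤ d * (p : ℝ) ^ (e + 1) := by
      push_cast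
      exact mul_le_mul_of_nonneg_right hd (by positivity)
    calc m * p ^ (e + 1) = ⌈((m * p ^ (e + 1) : ℕ) : ℝ)⌉₊ := (Nat.ceil_natCast _).symm
      _ ≤ _ := Nat.ceil_le_ceil h1
  have hr : m * (p ^ (e + 1) - 1) + 1 ≤ ⌈d * (p : ℝ) ^ (e + 1)⌉₊ := by
    have hmul : m * p ^ (e + 1) = m * (p ^ (e + 1) - 1) + m := by
      conv_lhs => rw [show p ^ (e + 1) = (p ^ (e + 1) - 1) + 1 by omega]
      rw [Nat.mul_add, Nat.mul_one]
    omega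
  rw [skoda_level hco ha hm e _ hr]
  have hceil : ⌈d * (p : ℝ) ^ (e + 1)⌉₊ - p ^ (e + 1) = ⌈(d - 1) * (p : ℝ) ^ (e + 1)⌉₊ := by
    rw [← hcast, ceil_sub_one_eq _ hd1]
  rw [hceil]

lemma not_jumping_of_bot {a : Ideal R} {g : Fin 0 → R}
    (ha : a = Ideal.span (Set.range g)) {α : ℝ} (hα : 0 < α) :
    ¬ (0 < α ∧ ∀ c : ℝ, 0 ≤ c → c < α → testIdeal p a c ≠ testIdeal p a α) := by
  have habot : a = ⊥ := by
    rw [ha, Set.range_eq_empty, Ideal.span_empty]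
  have htau : ∀ c : ℝ, 0 < c → testIdeal p a c = ⊥ := by
    intro c hc
    unfold testIdeal
    refine le_bot_iff.mp (iSup_le fun e => ?_)
    have hceil : ⌈c * (p : ℝ) ^ (e + 1)⌉₊ ≠ 0 := by
      refine Nat.ceil_pos.mpr ?_ |>.ne'
      have hppos : (0 : ℝ) < (p : ℝ) ^ (e + 1) := by
        have : (0 : ℝ) < (p : ℝ) := by exact_mod_cast hp.out.pos
        positivity
      positivity
    have hbot : a ^ ⌈c * (p : ℝ) ^ (e + 1)⌉₊ = ⊥ := by
      rw [habot, ← Ideal.zero_eq_bot, zero_pow hceil]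
    rw [hbot]
    refine sInf_le ?_
    show (⊥ : Ideal R) ≤ bracketPow ⊥ (p ^ (e + 1))
    exact bot_le
  rintro ⟨-, hne⟩
  exact hne (α / 2) (by linarith) (by linarith)
    ((htau _ (by linarith)).trans (htau _ hα).symm)

end Main3

/-- `pα` is an F-jumping exponent if `α` is, and `α - 1` is one
if `α > m` is one and `a` is generated by `m` elements. -/
theorem stmt16_jumping_exponent_shifts
    {R : Type*} [CommRing R] [IsNoetherianRing R] (p : ℕ) [Fact p.Prime] [CharP R p]
    (hfin : (frobenius R p).Finite) (hflat : (frobenius R p).Flat)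
    (a : Ideal R) :
    (∀ α : ℝ, 0 < α → IsFJumpingExponent p a α → IsFJumpingExponent p a ((p : ℝ) * α)) ∧
    (∀ (m : ℕ) (g : Fin m → R), a = Ideal.span (Set.range g) →
      ∀ α : ℝ, (m : ℝ) < α → IsFJumpingExponent p a α →
        IsFJumpingExponent p a (α - 1)) := by
  have hpp : p.Prime := Fact.out
  have hfr : CoordsFor (frobenius R p) := by
    obtain ⟨n, c, w, h1, h2, h3⟩ := exists_coords_general (frobenius R p) hfin hflat
    exact ⟨n, c, w, h1, h2, h3⟩
  have hco : ∀ e, CoordsFor (iterateFrobenius R p e) := by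
    intro e
    induction e with
    | zero => rw [iterateFrobenius_zero]; exact coordsFor_id
    | succ e ih =>
      have hstep : iterateFrobenius R p (e + 1) =
          (iterateFrobenius R p e).comp (frobenius R p) := by
        rw [← iterateFrobenius_one R p, ← iterateFrobenius_add]
      rw [hstep]
      exact ih.comp hfr
  have hppos : (0 : ℝ) < (p : ℝ) := by exact_mod_cast hpp.pos
  constructor
  · intro α hα hjump
    unfold IsFJumpingExponent at hjump ⊢
    obtain ⟨-, hjump⟩ := hjump
    refine ⟨mul_pos hppos hα, ?_⟩
    intro c hc hlt heq
    refine hjump (c / p) (div_nonneg hc (le_of_lt hppos)) ?_ ?_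
    · rw [div_lt_iff₀ hppos]
      linarith
    · have h1 := frobRoot_p_testIdeal hco a (c / p)
      have h2 := frobRoot_p_testIdeal hco a α
      have hcp : (p : ℝ) * (c / p) = c := by field_simp
      rw [hcp] at h1
      rw [← h1, ← h2, heq]
  · intro m g ha α hmα hjump
    unfold IsFJumpingExponent at hjump ⊢
    obtain ⟨hα, hjump⟩ := hjump
    by_cases hm : m = 0
    · subst hm
      exact absurd ⟨hα, hjump⟩ (not_jumping_of_bot ha hα)
    have hm1 : 1 ≤ m := Nat.one_le_iff_ne_zero.mpr hm
    have hm1R : (1 : ℝ) ≤ (m : ℝ) := by exact_mod_cast hm1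
    refine ⟨by linarith, ?_⟩
    intro c hc hlt heq
    set c' := max c ((m : ℝ) - 1) with hc'def
    have hcc' : c ≤ c' := le_max_left _ _
    have hmc' : (m : ℝ) - 1 ≤ c' := le_max_right _ _
    have hc'lt : c' < α - 1 := max_lt hlt (by linarith)
    have htc' : testIdeal p a c' = testIdeal p a (α - 1) := by
      apply le_antisymm
      · rw [← heq]
        exact testIdeal_antitone a hcc'
      · exact testIdeal_antitone a (le_of_lt hc'lt)
    refine hjump (c' + 1) (by linarith) (by linarith) ?_
    have hs1 : testIdeal p a (c' + 1) = a * testIdeal p a (c' + 1 - 1) :=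
      skoda_tau hco ha hm1 (by linarith)
    have hs2 : testIdeal p a α = a * testIdeal p a (α - 1) :=
      skoda_tau hco ha hm1 (le_of_lt hmα)
    rw [hs1, hs2, show c' + 1 - 1 = c' by ring, htc']
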